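/- Let {ε_k}_{k≥1} be a strictly decreasing sequence of positive reals with ε_k → 0, let {l_k} and {L_k} be sequences of positive integers with max{ l_{k+1}, ∑_{j=1}^{k-1} l_j L_j } ≤ ε_k ∑_{j=1}^{k} l_j L_j for all k, and define n_k := l'_k + t_k where l'_k = l_j when k = L_1 + ⋯ + L_{j−1} + q with 1 ≤ q ≤ L_j, and 0 ≤ t_k ≤ ε_j l_j in that case. Then lim_{k→∞} (n_1 + ⋯ + n_k)/(n_1 + ⋯ + n_{k−1}) = 1. -/

import Mathlib

open MeasureTheory Filter Topology BigOperators
open scoped ENNReal Classical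

noncomputable section

/-- The one-sided shift map. -/
def shiftN {A : Type*} : (ℕ → A) → (ℕ → A) := fun x n => x (n + 1)

/-- The two-sided shift map. -/
def shiftZ {A : Type*} : (ℤ → A) → (ℤ → A) := fun x n => x (n + 1)

/-- the bookkeeping estimate `(n₁ + ⋯ + n_k)/(n₁ + ⋯ + n_{k-1}) → 1` for block
lengths `n_k = l'_k + t_k` with `t_k ≤ ε_j l_j` in block `j`, under the growth condition on `L`. -/
theorem stmt12 (εs : ℕ → ℝ) (l L n : ℕ → ℕ)
    (hεpos : ∀ k ≥ 1, 0 < εs k) (hεanti : ∀ k ≥ 1, εs (k + 1) < εs k)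
    (hε0 : Tendsto εs atTop (𝓝 0))
    (hl : ∀ k, 1 ≤ l k) (hL : ∀ k, 1 ≤ L k)
    (hLcond : ∀ k ≥ 1,
      max ((l (k + 1) : ℝ)) (∑ j ∈ Finset.Icc 1 (k - 1), (l j : ℝ) * (L j : ℝ)) ≤
        εs k * ∑ j ∈ Finset.Icc 1 k, (l j : ℝ) * (L j : ℝ))
    (hn : ∀ k ≥ 1, ∀ j ≥ 1, ∀ q : ℕ, 1 ≤ q → q ≤ L j →
      k = (∑ i ∈ Finset.Icc 1 (j - 1), L i) + q →
      ∃ t : ℕ, n k = l j + t ∧ (t : ℝ) ≤ εs j * (l j : ℝ)) :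
    Tendsto (fun k : ℕ =>
        (∑ i ∈ Finset.Icc 1 k, (n i : ℝ)) / (∑ i ∈ Finset.Icc 1 (k - 1), (n i : ℝ)))
      atTop (𝓝 1) := by
  classical
  set T : ℕ → ℕ := fun j => ∑ i ∈ Finset.Icc 1 j, L i with hTdef
  have hT0 : T 0 = 0 := by simp [hTdef]
  have hTsucc : ∀ j, T (j + 1) = T j + L (j + 1) := fun j =>
    Finset.sum_Icc_succ_top (by omega) L
  have hTge : ∀ j, j ≤ T j := by
    intro j
    induction j with
    | zero => omega
    | succ m ih => have := hL (m + 1); rw [hTsucc]; omega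
  have hTmono : ∀ a b : ℕ, a ≤ b → T a ≤ T b := by
    intro a b hab
    exact Finset.sum_le_sum_of_subset (Finset.Icc_subset_Icc_right hab)
  -- block decomposition
  have hblock : ∀ k, 1 ≤ k → ∃ j, 1 ≤ j ∧ ∃ q, 1 ≤ q ∧ q ≤ L j ∧
      k = T (j - 1) + q ∧ T (j - 1) < k ∧ k ≤ T j := by
    intro k hk
    have hex : ∃ j, k ≤ T j := ⟨k, hTge k⟩
    set j := Nat.find hex with hj
    have hjle : k ≤ T j := Nat.find_spec hex
    have hj1 : 1 ≤ j := by
      by_contra h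
      have hj0 : j = 0 := by omega
      rw [hj0, hT0] at hjle; omega
    have hlt : ¬ k ≤ T (j - 1) := Nat.find_min hex (by omega)
    have hTj : T j = T (j - 1) + L j := by
      have := hTsucc (j - 1)
      rwa [Nat.sub_add_cancel hj1] at this
    exact ⟨j, hj1, k - T (j - 1), by omega, by omega, by omega, by omega, hjle⟩
  -- per-block bounds on n
  have hnl : ∀ j, 1 ≤ j → ∀ q, 1 ≤ q → q ≤ L j →
      l j ≤ n (T (j - 1) + q) ∧ ((n (T (j - 1) + q) : ℝ)) ≤ (1 + εs j) * (l j : ℝ) := by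
    intro j hj q hq1 hq2
    obtain ⟨t, ht1, ht2⟩ := hn (T (j - 1) + q) (by omega) j hj q hq1 hq2 rfl
    constructor
    · omega
    · rw [ht1]; push_cast; linarith
  -- ℕ-valued lower bound for partial sums up to the end of block m
  have hSlow : ∀ m, (∑ j ∈ Finset.Icc 1 m, l j * L j) ≤ ∑ i ∈ Finset.Icc 1 (T m), n i := by
    intro m
    induction m with
    | zero => simp [hT0]
    | succ m ih =>
      rw [Finset.sum_Icc_succ_top (by omega : 1 ≤ m + 1)]
      have hsplit : ∑ i ∈ Finset.Icc 1 (T (m + 1)), n i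
          = (∑ i ∈ Finset.Icc 1 (T m), n i) + ∑ i ∈ Finset.Ioc (T m) (T (m + 1)), n i := by
        have hIoc : ∀ x : ℕ, Finset.Icc 1 x = Finset.Ioc 0 x := by
          intro x; ext y; simp [Finset.mem_Icc, Finset.mem_Ioc]; omega
        rw [hIoc, hIoc,
          ← Finset.sum_Ioc_consecutive n (Nat.zero_le (T m)) (hTmono m (m + 1) (by omega))]
      rw [hsplit]
      have hbound : L (m + 1) * l (m + 1) ≤ ∑ i ∈ Finset.Ioc (T m) (T (m + 1)), n i := by
        have hcard : (Finset.Ioc (T m) (T (m + 1))).card = L (m + 1) := by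
          rw [Nat.card_Ioc, hTsucc]; omega
        have h1 : (Finset.Ioc (T m) (T (m + 1))).card • l (m + 1)
            ≤ ∑ i ∈ Finset.Ioc (T m) (T (m + 1)), n i := by
          apply Finset.card_nsmul_le_sum
          intro i hi
          simp only [Finset.mem_Ioc] at hi
          have hT1 := hTsucc m
          have key := (hnl (m + 1) (by omega) (i - T m) (by omega) (by omega)).1
          have heq : T ((m + 1) - 1) + (i - T m) = i := by
            simp only [Nat.add_sub_cancel]; omega
          rwa [heq] at key
        rw [hcard, smul_eq_mul] at h1
        exact h1
      exact Nat.add_le_add ih (by rw [Nat.mul_comm]; exact hbound)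
  -- splitting off the top term of a real partial sum
  have hsplitR : ∀ a : ℕ, 1 ≤ a →
      (∑ i ∈ Finset.Icc 1 a, (n i : ℝ)) = (∑ i ∈ Finset.Icc 1 (a - 1), (n i : ℝ)) + n a := by
    intro a ha
    obtain ⟨b, rfl⟩ : ∃ b, a = b + 1 := ⟨a - 1, by omega⟩
    rw [Finset.sum_Icc_succ_top (by omega : 1 ≤ b + 1)]
    simp
  have hmonoR : ∀ a b : ℕ, a ≤ b →
      (∑ i ∈ Finset.Icc 1 a, (n i : ℝ)) ≤ ∑ i ∈ Finset.Icc 1 b, (n i : ℝ) := by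
    intro a b hab
    exact Finset.sum_le_sum_of_subset_of_nonneg (Finset.Icc_subset_Icc_right hab)
      (fun i _ _ => by positivity)
  -- the main limit
  rw [Metric.tendsto_atTop]
  intro δ hδ
  have htend : Tendsto (fun m => (1 + εs m) * εs m) atTop (𝓝 0) := by
    have h := ((tendsto_const_nhds (x := (1 : ℝ)) (f := atTop)).add hε0).mul hε0
    simpa using h
  obtain ⟨J₀, hJ₀⟩ := (Metric.tendsto_atTop.mp htend) δ hδ
  refine ⟨T (max J₀ 1) + 1, ?_⟩
  intro k hk
  set J := max J₀ 1 with hJdef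
  have hJ1 : 1 ≤ J := le_max_right _ _
  have hk1 : 1 ≤ k := by have := hTge J; omega
  obtain ⟨j, hj1, q, hq1, hq2, hkeq, hklt, hkle⟩ := hblock k hk1
  have hJj : J < j := by
    by_contra h
    have := hTmono j J (by omega)
    omega
  obtain ⟨m, rfl⟩ : ∃ m, j = m + 1 := ⟨j - 1, by omega⟩
  have hmJ : J ≤ m := by omega
  have hm1 : 1 ≤ m := by omega
  simp only [Nat.add_sub_cancel] at hkeq hklt
  -- abbreviations
  set S' : ℝ := ∑ i ∈ Finset.Icc 1 m, (l i : ℝ) * (L i : ℝ) with hS'def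
  set A : ℝ := ∑ i ∈ Finset.Icc 1 (k - 1), (n i : ℝ) with hAdef
  have hεm : 0 < εs m := hεpos m hm1
  have hεm1 : εs (m + 1) < εs m := hεanti m hm1
  have hS'pos : 0 < S' := by
    apply Finset.sum_pos
    · intro i _
      have h1 : (0 : ℝ) < l i := by exact_mod_cast Nat.lt_of_lt_of_le Nat.zero_lt_one (hl i)
      have h2 : (0 : ℝ) < L i := by exact_mod_cast Nat.lt_of_lt_of_le Nat.zero_lt_one (hL i)
      positivity
    · exact Finset.nonempty_Icc.mpr hm1
  have hS'leA : S' ≤ A := by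
    have h1 : S' ≤ ∑ i ∈ Finset.Icc 1 (T m), (n i : ℝ) := by
      have := hSlow m
      have hc : ((∑ j ∈ Finset.Icc 1 m, l j * L j : ℕ) : ℝ)
          ≤ ((∑ i ∈ Finset.Icc 1 (T m), n i : ℕ) : ℝ) := by exact_mod_cast this
      push_cast at hc
      rw [hS'def]
      convert hc using 2
    have h2 : (∑ i ∈ Finset.Icc 1 (T m), (n i : ℝ)) ≤ A := hmonoR (T m) (k - 1) (by omega)
    linarith
  have hApos : 0 < A := lt_of_lt_of_le hS'pos hS'leA
  -- bound on l (m+1)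
  have hljS : (l (m + 1) : ℝ) ≤ εs m * S' := by
    have hc := hLcond m hm1
    exact le_trans (le_max_left _ _) hc
  -- bound on n k
  have hnk : (n k : ℝ) ≤ (1 + εs m) * (εs m * S') := by
    have hb := (hnl (m + 1) (by omega) q hq1 hq2).2
    simp only [Nat.add_sub_cancel] at hb
    rw [← hkeq] at hb
    have hlpos : (0 : ℝ) ≤ (l (m + 1) : ℝ) := by positivity
    have h1 : (n k : ℝ) ≤ (1 + εs m) * (l (m + 1) : ℝ) := by nlinarith
    have h2 : (1 + εs m) * (l (m + 1) : ℝ) ≤ (1 + εs m) * (εs m * S') := by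
      apply mul_le_mul_of_nonneg_left hljS
      linarith
    linarith
  -- final estimate
  have hnum : (∑ i ∈ Finset.Icc 1 k, (n i : ℝ)) = A + n k := hsplitR k hk1
  have hratio : (∑ i ∈ Finset.Icc 1 k, (n i : ℝ)) / A - 1 = (n k : ℝ) / A := by
    rw [hnum]; field_simp; ring
  rw [Real.dist_eq, hratio, abs_of_nonneg (by positivity)]
  have hdiv : (n k : ℝ) / A ≤ (1 + εs m) * εs m := by
    rw [div_le_iff₀ hApos]
    calc (n k : ℝ) ≤ (1 + εs m) * (εs m * S') := hnk
      _ ≤ (1 + εs m) * εs m * A := by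
          rw [mul_assoc]
          apply mul_le_mul_of_nonneg_left _ (by linarith : (0:ℝ) ≤ 1 + εs m)
          exact mul_le_mul_of_nonneg_left hS'leA (le_of_lt hεm)
  have hfin : (1 + εs m) * εs m < δ := by
    have := hJ₀ m (le_trans (le_max_left _ _) hmJ)
    rw [Real.dist_eq, sub_zero] at this
    exact lt_of_le_of_lt (le_abs_self _) this
  linarith

end
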